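/- Let F : ℂ → ℂ be entire with F real-valued on the real axis, let f be its restriction to ℝ with Taylor coefficients c_k = F^{(k)}(0)/k!, let m ≥ 1 be an integer, 0 < ν < 1 and a > 0. Then the finite part integral ⨍_0^a f(x)/x^{m+ν} dx, defined as the limit as ε → 0⁺ of [∫_ε^a f(x) x^{-m-ν} dx − Σ_{k=0}^{m-1} c_k ε^{k+1-m-ν}/(m+ν-k-1)], equals (1/(e^{-2πiν} − 1)) ∫_0^{2π} F(a e^{iθ}) a^{1-m-ν} e^{i(1-m-ν)θ} i dθ; in particular this expression is real. -/

import Mathlib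

open Filter MeasureTheory Set Complex

set_option maxHeartbeats 1000000

private lemma tay_hasSum {F : ℂ → ℂ} (hF : Differentiable ℂ F) {c : ℕ → ℝ}
    (hc : ∀ k, (c k : ℂ) = iteratedDeriv k F 0 / (Nat.factorial k)) (z : ℂ) :
    HasSum (fun k => (c k : ℂ) * z ^ k) (F z) := by
  have h := Complex.hasSum_taylorSeries_of_entire hF 0 z
  have e : (fun k => (c k : ℂ) * z ^ k)
      = fun n => ((Nat.factorial n : ℂ))⁻¹ • (z - 0) ^ n • iteratedDeriv n F 0 := by
    funext k
    rw [hc k]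
    simp only [smul_eq_mul, sub_zero]
    ring
  rw [e]; exact h

private lemma abs_summable_of_hasSum {c : ℕ → ℝ} {r : ℝ} (hr : 0 ≤ r) {S : ℂ}
    (h : HasSum (fun k => (c k : ℂ) * ((r + 1 : ℝ) : ℂ) ^ k) S) :
    Summable fun k => |c k| * r ^ k := by
  have h2 : Summable fun k => |c k| * (r + 1) ^ k := by
    have hn := summable_norm_iff.mpr h.summable
    have : (fun k => ‖(c k : ℂ) * ((r + 1 : ℝ) : ℂ) ^ k‖) = fun k => |c k| * (r + 1) ^ k := by
      funext k
      rw [norm_mul, norm_pow, Complex.norm_real, Complex.norm_real, Real.norm_eq_abs,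
        Real.norm_eq_abs, _root_.abs_of_nonneg (by linarith : (0:ℝ) ≤ r + 1)]
    rwa [this] at hn
  refine h2.of_nonneg_of_le (fun k => by positivity) (fun k => ?_)
  gcongr
  linarith

theorem stmt_7 (F : ℂ → ℂ) (hF : Differentiable ℂ F)
    (hreal : ∀ x : ℝ, (F x).im = 0)
    (f : ℝ → ℝ) (hf : ∀ x : ℝ, f x = (F x).re)
    (c : ℕ → ℝ) (hc : ∀ k, (c k : ℂ) = iteratedDeriv k F 0 / (Nat.factorial k))
    (m : ℕ) (hm : 1 ≤ m) (ν : ℝ) (hν0 : 0 < ν) (hν1 : ν < 1) (a : ℝ) (ha : 0 < a) :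
    ∃ L : ℝ,
      Tendsto
        (fun ε : ℝ =>
          (∫ x in ε..a, f x / x ^ ((m : ℝ) + ν)) -
            ∑ k ∈ Finset.range m,
              c k * ε ^ ((k : ℝ) + 1 - m - ν) / ((m : ℝ) + ν - k - 1))
        (nhdsWithin 0 (Set.Ioi 0)) (nhds L) ∧
      (L : ℂ) = (1 / (Complex.exp (-2 * Real.pi * Complex.I * (ν : ℂ)) - 1)) *
        ∫ θ in (0 : ℝ)..(2 * Real.pi),
          F ((a : ℂ) * Complex.exp ((θ : ℂ) * Complex.I)) *
            ((a ^ ((1 : ℝ) - m - ν) : ℝ) : ℂ) *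
            Complex.exp (Complex.I * (1 - (m : ℂ) - (ν : ℂ)) * (θ : ℂ)) *
            Complex.I := by
  have hν1' : (0:ℝ) < 1 - ν := by linarith
  set lam : ℕ → ℝ := fun k => (k : ℝ) + 1 - m - ν with hlam_def
  set δ : ℝ := min ν (1 - ν) with hδ_def
  have hδ : 0 < δ := lt_min hν0 hν1'
  have hlam_le : ∀ k < m, lam k ≤ -ν := by
    intro k hk
    have : (k:ℝ) + 1 ≤ m := by exact_mod_cast hk
    simp only [hlam_def]; linarith
  have hlam_ge : ∀ k, m ≤ k → 1 - ν ≤ lam k := by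
    intro k hk
    have : (m:ℝ) ≤ k := by exact_mod_cast hk
    simp only [hlam_def]; linarith
  have hlam_ne : ∀ k, lam k ≠ 0 := by
    intro k
    rcases lt_or_ge k m with h | h
    · have := hlam_le k h; intro h0; rw [h0] at this; linarith
    · have := hlam_ge k h; intro h0; rw [h0] at this; linarith
  have hlam_abs : ∀ k, δ ≤ |lam k| := by
    intro k
    rcases lt_or_ge k m with h | h
    · have := hlam_le k h
      have h1 : ν ≤ -(lam k) := by linarith
      calc δ ≤ ν := min_le_left _ _
        _ ≤ -(lam k) := h1
        _ ≤ |lam k| := by rw [abs_eq_max_neg]; exact le_max_right _ _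
    · have := hlam_ge k h
      calc δ ≤ 1 - ν := min_le_right _ _
        _ ≤ lam k := this
        _ ≤ |lam k| := le_abs_self _
  have hTay : ∀ z : ℂ, HasSum (fun k => (c k : ℂ) * z ^ k) (F z) :=
    fun z => tay_hasSum hF hc z
  have hTayR : ∀ x : ℝ, HasSum (fun k => c k * x ^ k) (f x) := by
    intro x
    have h := (hTay x).mapL Complex.reCLM
    have e1 : (fun k => Complex.reCLM ((c k : ℂ) * (x:ℂ) ^ k)) = fun k => c k * x ^ k := by
      funext k
      have e : ((c k : ℂ) * (x:ℂ) ^ k) = ((c k * x ^ k : ℝ) : ℂ) := by push_cast; ring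
      rw [Complex.reCLM_apply, e, Complex.ofReal_re]
    rw [e1] at h
    simpa [hf x] using h
  have SAgen : ∀ r : ℝ, 0 ≤ r → Summable fun k => |c k| * r ^ k := by
    intro r hr
    exact abs_summable_of_hasSum hr (hTay (((r + 1 : ℝ)) : ℂ))
  have SA : Summable fun k => |c k| * a ^ k := SAgen a ha.le
  -- a ^ lam k decomposition
  have halam : ∀ k : ℕ, a ^ (lam k) = a ^ k * a ^ ((1:ℝ) - m - ν) := by
    intro k
    rw [← Real.rpow_natCast a k, ← Real.rpow_add ha]
    congr 1
    simp only [hlam_def]; ring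
  -- summability of the L series
  have hLS : Summable fun k => c k * a ^ (lam k) / lam k := by
    refine Summable.of_norm ?_
    refine (SA.mul_right (a ^ ((1:ℝ) - m - ν) / δ)).of_nonneg_of_le
      (fun k => norm_nonneg _) (fun k => ?_)
    rw [Real.norm_eq_abs, abs_div, abs_mul,
      _root_.abs_of_nonneg (Real.rpow_nonneg ha.le _), halam k]
    calc |c k| * (a ^ k * a ^ ((1:ℝ) - m - ν)) / |lam k|
        ≤ |c k| * (a ^ k * a ^ ((1:ℝ) - m - ν)) / δ := by
          gcongr
          exact hlam_abs k
      _ = |c k| * a ^ k * (a ^ ((1:ℝ) - m - ν) / δ) := by ring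
  set L : ℝ := ∑' k, c k * a ^ (lam k) / lam k with hL_def
  have h_La : HasSum (fun k => c k * a ^ (lam k) / lam k) L := hLS.hasSum
  have key1 : ∀ ε : ℝ, ε ∈ Ioo (0:ℝ) a →
      HasSum (fun k => c k * ((a ^ lam k - ε ^ lam k) / lam k))
        (∫ x in ε..a, f x / x ^ ((m : ℝ) + ν)) := by
    intro ε hε
    obtain ⟨hε0, hεa⟩ := hε
    have huIoc : uIoc ε a = Ioc ε a := uIoc_of_le hεa.le
    have hs := intervalIntegral.hasSum_integral_of_dominated_convergence
      (μ := volume) (a := ε) (b := a)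
      (F := fun (k : ℕ) (x : ℝ) => c k * x ^ ((k:ℝ) - m - ν))
      (f := fun x => f x / x ^ ((m:ℝ) + ν))
      (bound := fun (k : ℕ) (_ : ℝ) => |c k| * a ^ k * ε ^ (-((m:ℝ) + ν)))
      (fun k => by
        rw [huIoc]
        refine ContinuousOn.aestronglyMeasurable ?_ measurableSet_Ioc
        exact continuousOn_const.mul (continuousOn_id.rpow_const
          (fun x hx => Or.inl (ne_of_gt (lt_trans hε0 hx.1))))
      )
      (fun k => by
        filter_upwards with x hx
        rw [huIoc] at hx
        obtain ⟨h1, h2⟩ := hx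
        have hx0 : (0:ℝ) < x := lt_trans hε0 h1
        rw [Real.norm_eq_abs, abs_mul,
          _root_.abs_of_nonneg (Real.rpow_nonneg hx0.le _)]
        rw [show (k:ℝ) - m - ν = (k:ℝ) + (-((m:ℝ) + ν)) by ring, Real.rpow_add hx0,
          Real.rpow_natCast]
        rw [mul_assoc]
        have hb1 : x ^ k ≤ a ^ k := pow_le_pow_left₀ hx0.le h2 k
        have hb2 : x ^ (-((m:ℝ) + ν)) ≤ ε ^ (-((m:ℝ) + ν)) :=
          Real.rpow_le_rpow_of_nonpos hε0 h1.le (neg_nonpos.mpr (by positivity))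
        exact mul_le_mul_of_nonneg_left
          (mul_le_mul hb1 hb2 (Real.rpow_nonneg hx0.le _) (by positivity)) (abs_nonneg _)
      )
      (by filter_upwards with t ht; exact SA.mul_right _)
      intervalIntegrable_const
      (by
        filter_upwards with x hx
        rw [huIoc] at hx
        have hx0 : (0:ℝ) < x := lt_trans hε0 hx.1
        have h := (hTayR x).div_const (x ^ ((m:ℝ) + ν))
        have e : (fun k : ℕ => c k * x ^ ((k:ℝ) - m - ν))
            = fun k => c k * x ^ k / x ^ ((m:ℝ) + ν) := by
          funext k
          rw [show (k:ℝ) - m - ν = (k:ℝ) - ((m:ℝ) + ν) by ring, Real.rpow_sub hx0,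
            Real.rpow_natCast, mul_div_assoc]
        rw [e]
        exact h
      )
    have e : (fun k : ℕ => ∫ x in ε..a, c k * x ^ ((k:ℝ) - m - ν))
        = fun k => c k * ((a ^ lam k - ε ^ lam k) / lam k) := by
      funext k
      rw [intervalIntegral.integral_const_mul]
      rw [integral_rpow (Or.inr ⟨by
        intro hcon
        apply hlam_ne k
        simp only [hlam_def]
        linarith [hcon], notMem_uIcc_of_lt hε0 ha⟩)]
      rw [show (k:ℝ) - m - ν + 1 = lam k by simp only [hlam_def]; ring]
    rw [e] at hs
    exact hs
  have SAtail : Summable fun i => |c (i + m)| * a ^ i := by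
    have h : Summable fun i => |c (i + m)| * a ^ (i + m) := (summable_nat_add_iff m).2 SA
    have e : (fun i => |c (i + m)| * a ^ i)
        = fun i => (|c (i + m)| * a ^ (i + m)) / a ^ m := by
      funext i
      rw [pow_add]
      field_simp
    rw [e]
    exact h.div_const _
  set T : ℝ → ℝ := fun ε => ∑' i, c (i + m) * ε ^ lam (i + m) / lam (i + m) with hT_def
  have key1' : ∀ ε : ℝ, ε ∈ Ioo (0:ℝ) a →
      (∫ x in ε..a, f x / x ^ ((m : ℝ) + ν)) -
          ∑ k ∈ Finset.range m, c k * ε ^ ((k : ℝ) + 1 - m - ν) / ((m : ℝ) + ν - k - 1)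
        = L - T ε := by
    intro ε hε
    have h_g : HasSum (fun k => c k * ε ^ lam k / lam k)
        (L - ∫ x in ε..a, f x / x ^ ((m:ℝ) + ν)) := by
      have h := h_La.sub (key1 ε hε)
      have e : (fun k => c k * a ^ lam k / lam k - c k * ((a ^ lam k - ε ^ lam k) / lam k))
          = fun k => c k * ε ^ lam k / lam k := funext fun k => by ring
      rwa [e] at h
    have htt := Summable.sum_add_tsum_nat_add (f := fun k => c k * ε ^ lam k / lam k) m h_g.summable
    rw [h_g.tsum_eq] at htt
    have efin : ∑ k ∈ Finset.range m, c k * ε ^ ((k : ℝ) + 1 - m - ν) / ((m : ℝ) + ν - k - 1)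
        = -∑ k ∈ Finset.range m, c k * ε ^ lam k / lam k := by
      rw [← Finset.sum_neg_distrib]
      apply Finset.sum_congr rfl
      intro k _
      rw [show (m:ℝ) + ν - k - 1 = -(lam k) by simp only [hlam_def]; ring, div_neg]
    rw [efin, sub_neg_eq_add]
    have hTε : T ε = ∑' i, c (i + m) * ε ^ lam (i + m) / lam (i + m) := rfl
    linarith [htt]
  have hTbound : ∀ ε : ℝ, ε ∈ Ioo (0:ℝ) a →
      ‖T ε‖ ≤ ((∑' i, |c (i + m)| * a ^ i) * (ε ^ ((1:ℝ) - ν) / (1 - ν))) := by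
    intro ε hε
    obtain ⟨hε0, hεa⟩ := hε
    have hlamj : ∀ i : ℕ, lam (i + m) = (i:ℝ) + (1 - ν) := by
      intro i; simp only [hlam_def]; push_cast; ring
    have hbd : ∀ i : ℕ, ‖c (i + m) * ε ^ lam (i + m) / lam (i + m)‖
        ≤ (|c (i + m)| * a ^ i) * (ε ^ ((1:ℝ) - ν) / (1 - ν)) := by
      intro i
      rw [Real.norm_eq_abs, abs_div, abs_mul,
        _root_.abs_of_nonneg (Real.rpow_nonneg hε0.le _),
        _root_.abs_of_nonneg (by rw [hlamj i]; positivity : (0:ℝ) ≤ lam (i + m))]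
      rw [hlamj i, Real.rpow_add hε0, Real.rpow_natCast]
      calc |c (i + m)| * (ε ^ i * ε ^ ((1:ℝ) - ν)) / ((i:ℝ) + (1 - ν))
          ≤ |c (i + m)| * (a ^ i * ε ^ ((1:ℝ) - ν)) / (1 - ν) := by
            gcongr
            linarith [Nat.cast_nonneg (α := ℝ) i]
        _ = (|c (i + m)| * a ^ i) * (ε ^ ((1:ℝ) - ν) / (1 - ν)) := by ring
    exact tsum_of_norm_bounded (SAtail.hasSum.mul_right _) hbd
  have hT0 : Tendsto T (nhdsWithin 0 (Set.Ioi 0)) (nhds 0) := by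
    refine squeeze_zero_norm'
      (a := fun ε : ℝ => (∑' i, |c (i + m)| * a ^ i) * (ε ^ ((1:ℝ) - ν) / (1 - ν))) ?_ ?_
    · filter_upwards [Ioo_mem_nhdsGT_of_mem (⟨le_refl (0:ℝ), ha⟩ : (0:ℝ) ∈ Ico (0:ℝ) a)]
        with ε hε
      exact hTbound ε hε
    · have h1 : Tendsto (fun ε : ℝ => ε ^ ((1:ℝ) - ν)) (nhds 0) (nhds 0) := by
        have hcont := (Real.continuousAt_rpow_const 0 (1 - ν) (Or.inr hν1'.le)).tendsto
        simpa [Real.zero_rpow (ne_of_gt hν1')] using hcont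
      have h2 : Tendsto (fun ε : ℝ => (∑' i, |c (i + m)| * a ^ i) * (ε ^ ((1:ℝ) - ν) / (1 - ν)))
          (nhdsWithin 0 (Set.Ioi 0)) (nhds ((∑' i, |c (i + m)| * a ^ i) * (0 / (1 - ν)))) :=
        (((h1.mono_left (nhdsWithin_le_nhds (s := Set.Ioi 0))).div_const (1 - ν)).const_mul _)
      simpa using h2
  refine ⟨L, ?_, ?_⟩
  · have htend : Tendsto (fun ε : ℝ => L - T ε) (nhdsWithin 0 (Set.Ioi 0)) (nhds L) := by
      simpa using tendsto_const_nhds.sub hT0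
    refine htend.congr' ?_
    filter_upwards [Ioo_mem_nhdsGT_of_mem (⟨le_refl (0:ℝ), ha⟩ : (0:ℝ) ∈ Ico (0:ℝ) a)]
      with ε hε
    exact (key1' ε hε).symm
  · set E : ℂ := Complex.exp (-2 * Real.pi * Complex.I * (ν : ℂ)) with hE_def
    have hE1 : E - 1 ≠ 0 := by
      rw [sub_ne_zero, hE_def]
      intro h
      rw [Complex.exp_eq_one_iff] at h
      obtain ⟨n, hn⟩ := h
      have h2 : ((-ν : ℝ) : ℂ) * (2 * (Real.pi : ℂ) * Complex.I)
          = (n : ℂ) * (2 * (Real.pi : ℂ) * Complex.I) := by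
        rw [← hn]; push_cast; ring
      have hne : (2 * (Real.pi : ℂ) * Complex.I) ≠ 0 := by
        simp [Real.pi_ne_zero, Complex.I_ne_zero]
      have h3 := mul_right_cancel₀ hne h2
      have h4 : (-ν : ℝ) = (n : ℝ) := by exact_mod_cast h3
      have h5 : (-1 : ℝ) < (n : ℝ) := by rw [← h4]; linarith
      have h6 : (n : ℝ) < 0 := by rw [← h4]; linarith
      have h7 : (-1 : ℤ) < n := by exact_mod_cast h5
      have h8 : n < 0 := by exact_mod_cast h6
      omega
    have hrw : ∀ (k : ℕ) (θ : ℝ),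
        (c k : ℂ) * ((a:ℂ) * Complex.exp ((θ:ℂ) * Complex.I)) ^ k *
            ((a ^ ((1:ℝ) - m - ν) : ℝ) : ℂ) *
            Complex.exp (Complex.I * (1 - (m:ℂ) - (ν:ℂ)) * (θ:ℂ)) * Complex.I
          = ((c k : ℂ) * ((a ^ k : ℝ) : ℂ) * ((a ^ ((1:ℝ) - m - ν) : ℝ) : ℂ) * Complex.I) *
            Complex.exp ((Complex.I * ((lam k : ℝ) : ℂ)) * (θ:ℂ)) := by
      intro k θ
      have h1 : ((a:ℂ) * Complex.exp ((θ:ℂ) * Complex.I)) ^ k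
          = ((a ^ k : ℝ) : ℂ) * Complex.exp ((k:ℂ) * ((θ:ℂ) * Complex.I)) := by
        rw [mul_pow, ← Complex.exp_nat_mul]
        push_cast
        ring
      rw [h1]
      rw [show (c k : ℂ) * (((a ^ k : ℝ) : ℂ) * Complex.exp ((k:ℂ) * ((θ:ℂ) * Complex.I))) *
            ((a ^ ((1:ℝ) - m - ν) : ℝ) : ℂ) *
            Complex.exp (Complex.I * (1 - (m:ℂ) - (ν:ℂ)) * (θ:ℂ)) * Complex.I
          = ((c k : ℂ) * ((a ^ k : ℝ) : ℂ) * ((a ^ ((1:ℝ) - m - ν) : ℝ) : ℂ) * Complex.I) *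
            (Complex.exp ((k:ℂ) * ((θ:ℂ) * Complex.I)) *
             Complex.exp (Complex.I * (1 - (m:ℂ) - (ν:ℂ)) * (θ:ℂ))) from by ring,
        ← Complex.exp_add]
      congr 1
      simp only [hlam_def]
      push_cast
      ring
    have hint2 : ∀ k : ℕ,
        (∫ θ in (0:ℝ)..(2 * Real.pi),
          (c k : ℂ) * ((a:ℂ) * Complex.exp ((θ:ℂ) * Complex.I)) ^ k *
            ((a ^ ((1:ℝ) - m - ν) : ℝ) : ℂ) *
            Complex.exp (Complex.I * (1 - (m:ℂ) - (ν:ℂ)) * (θ:ℂ)) * Complex.I)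
        = ((c k * a ^ lam k / lam k : ℝ) : ℂ) * (E - 1) := by
      intro k
      have hlamC : ((lam k : ℝ) : ℂ) ≠ 0 := Complex.ofReal_ne_zero.mpr (hlam_ne k)
      have hcne : Complex.I * ((lam k : ℝ) : ℂ) ≠ 0 := mul_ne_zero Complex.I_ne_zero hlamC
      simp only [hrw k]
      rw [intervalIntegral.integral_const_mul, integral_exp_mul_complex hcne]
      have hexp2 : Complex.exp (Complex.I * ((lam k : ℝ):ℂ) * ((2 * Real.pi : ℝ):ℂ)) = E := by
        rw [show Complex.I * ((lam k : ℝ):ℂ) * ((2 * Real.pi : ℝ):ℂ)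
            = ((k + 1 - m : ℤ) : ℂ) * (2 * (Real.pi:ℂ) * Complex.I) +
              (-2 * (Real.pi:ℂ) * Complex.I * (ν:ℂ)) from by
          simp only [hlam_def]; push_cast; ring]
        rw [Complex.exp_add, Complex.exp_int_mul_two_pi_mul_I, one_mul, hE_def]
      rw [hexp2]
      rw [show ((0:ℝ):ℂ) = (0:ℂ) from rfl, mul_zero, Complex.exp_zero]
      rw [halam k]
      push_cast
      field_simp
    have hs2 := intervalIntegral.hasSum_integral_of_dominated_convergence
      (μ := volume) (a := (0:ℝ)) (b := 2 * Real.pi)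
      (F := fun (k : ℕ) (θ : ℝ) =>
        (c k : ℂ) * ((a:ℂ) * Complex.exp ((θ:ℂ) * Complex.I)) ^ k *
          ((a ^ ((1:ℝ) - m - ν) : ℝ) : ℂ) *
          Complex.exp (Complex.I * (1 - (m:ℂ) - (ν:ℂ)) * (θ:ℂ)) * Complex.I)
      (f := fun θ : ℝ =>
        F ((a:ℂ) * Complex.exp ((θ:ℂ) * Complex.I)) * ((a ^ ((1:ℝ) - m - ν) : ℝ) : ℂ) *
          Complex.exp (Complex.I * (1 - (m:ℂ) - (ν:ℂ)) * (θ:ℂ)) * Complex.I)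
      (bound := fun (k : ℕ) (_ : ℝ) => |c k| * a ^ k * a ^ ((1:ℝ) - m - ν))
      (fun k => (Continuous.aestronglyMeasurable (by fun_prop)))
      (fun k => by
        filter_upwards with θ hθ
        rw [hrw k, norm_mul]
        have h1 : Complex.I * ((lam k : ℝ):ℂ) * (θ:ℂ) = (((lam k * θ : ℝ)):ℂ) * Complex.I := by
          push_cast; ring
        have h2 : ‖Complex.exp (Complex.I * ((lam k : ℝ):ℂ) * (θ:ℂ))‖ = 1 := by
          rw [h1, Complex.norm_exp_ofReal_mul_I]
        rw [h2, mul_one]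
        simp only [norm_mul, Complex.norm_real, Complex.norm_I, mul_one, Real.norm_eq_abs]
        rw [_root_.abs_of_nonneg (pow_nonneg ha.le k),
          _root_.abs_of_nonneg (Real.rpow_nonneg ha.le _)])
      (by filter_upwards with θ hθ; exact SA.mul_right _)
      intervalIntegrable_const
      (by
        filter_upwards with θ hθ
        have h := (hTay ((a:ℂ) * Complex.exp ((θ:ℂ) * Complex.I))).mul_right
          (((a ^ ((1:ℝ) - m - ν) : ℝ) : ℂ) *
            Complex.exp (Complex.I * (1 - (m:ℂ) - (ν:ℂ)) * (θ:ℂ)) * Complex.I)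
        simpa only [← mul_assoc] using h)
    have e2 : (fun k : ℕ => ∫ θ in (0:ℝ)..(2 * Real.pi),
          (c k : ℂ) * ((a:ℂ) * Complex.exp ((θ:ℂ) * Complex.I)) ^ k *
            ((a ^ ((1:ℝ) - m - ν) : ℝ) : ℂ) *
            Complex.exp (Complex.I * (1 - (m:ℂ) - (ν:ℂ)) * (θ:ℂ)) * Complex.I)
        = fun k => ((c k * a ^ lam k / lam k : ℝ) : ℂ) * (E - 1) := funext hint2
    rw [e2] at hs2
    have hofL : HasSum (fun k => ((c k * a ^ lam k / lam k : ℝ) : ℂ) * (E - 1))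
        ((L : ℂ) * (E - 1)) := by
      have h := h_La.mapL Complex.ofRealCLM
      simp only [Complex.ofRealCLM_apply] at h
      exact h.mul_right _
    have hInt := hs2.unique hofL
    rw [hInt]
    field_simp
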